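/- Let (M, g) be a compact connected Riemannian manifold, and suppose smooth functions f (complex-valued) and φ satisfy both the pointwise equation 0 = 4∇*∇f − f + (|f|² + |φ|²) f and the integral identity ∫_M (|f|² − 1) dμ = ∫_M |φ|² dμ. Then |f| ≡ 1, φ ≡ 0, and ∇f ≡ 0 on M. -/

import Mathlib

open MeasureTheory Complex

/-- On a compact connected Riemannian manifold, if smooth `f : M → ℂ`
and `φ` satisfy `0 = 4∇*∇f − f + (|f|² + |φ|²) f` pointwise together with the
integral identity `∫ (|f|² − 1) dμ = ∫ |φ|² dμ`, then `|f| ≡ 1`, `φ ≡ 0` and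
`∇f ≡ 0`.

The rough Laplacian `∇*∇` is abstracted via its value `Δcf = ∇*∇f` on `f`, its
value `ΔRnormsq = ∇*∇(|f|²)` on `|f|²`, and `gradsq = |∇f|²`, related by the
Bochner identity, with the maximum principle for the positive Laplacian and the
vanishing of the Laplacian on constants. -/
theorem stmt_4 {M : Type*} [TopologicalSpace M] [CompactSpace M]
    [ConnectedSpace M] [Nonempty M]
    [MeasurableSpace M] [BorelSpace M]
    (μ : Measure M) [IsFiniteMeasure μ] [μ.IsOpenPosMeasure]
    (f φ : M → ℂ) (hf : Continuous f) (hφ : Continuous φ)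
    (Δcf : M → ℂ)        -- the function ∇*∇f
    (ΔRnormsq : M → ℝ)   -- the function ∇*∇(|f|²)
    (gradsq : M → ℝ)     -- the function |∇f|²
    (hgrad_nonneg : ∀ x, 0 ≤ gradsq x)
    (hBochner : ∀ x, 2 * ΔRnormsq x =
      4 * (Δcf x * (starRingEnd ℂ) (f x)).re - 4 * gradsq x)
    (hmax : ∀ p, (∀ x, ‖f x‖ ≤ ‖f p‖) → 0 ≤ ΔRnormsq p)
    (hconst : (∀ x y, ‖f x‖ = ‖f y‖) → ∀ x, ΔRnormsq x = 0)
    (heq : ∀ x, (0 : ℂ) =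
      4 * Δcf x - f x + ((‖f x‖ ^ 2 + ‖φ x‖ ^ 2 : ℝ) : ℂ) * f x)
    (hint : ∫ x, (‖f x‖ ^ 2 - 1) ∂μ = ∫ x, ‖φ x‖ ^ 2 ∂μ) :
    (∀ x, ‖f x‖ = 1) ∧ (∀ x, φ x = 0) ∧ (∀ x, gradsq x = 0) := by
  -- Key pointwise identity
  have key : ∀ x, 2 * ΔRnormsq x =
      (1 - ‖f x‖ ^ 2 - ‖φ x‖ ^ 2) * ‖f x‖ ^ 2 - 4 * gradsq x := by
    intro x
    have hc : f x * (starRingEnd ℂ) (f x) = ((‖f x‖ ^ 2 : ℝ) : ℂ) := by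
      rw [Complex.mul_conj]
      norm_cast
      rw [Complex.normSq_eq_norm_sq]
    have h5 : (4 : ℂ) * (Δcf x * (starRingEnd ℂ) (f x)) =
        (((1 - ‖f x‖ ^ 2 - ‖φ x‖ ^ 2) * ‖f x‖ ^ 2 : ℝ) : ℂ) := by
      have h0 := heq x
      push_cast at h0 hc ⊢
      linear_combination (starRingEnd ℂ) (f x) * (-h0) +
        (1 - (‖f x‖ : ℂ) ^ 2 - (‖φ x‖ : ℂ) ^ 2) * hc
    have hre : 4 * (Δcf x * (starRingEnd ℂ) (f x)).re =
        (1 - ‖f x‖ ^ 2 - ‖φ x‖ ^ 2) * ‖f x‖ ^ 2 := by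
      have h6 := congrArg Complex.re h5
      rw [Complex.ofReal_re] at h6
      rw [show ((4 : ℂ) * (Δcf x * (starRingEnd ℂ) (f x))).re =
          4 * (Δcf x * (starRingEnd ℂ) (f x)).re by simp [Complex.mul_re]] at h6
      exact h6
    rw [hBochner x, hre]
  -- Maximum principle: ‖f‖ ≤ 1 everywhere
  obtain ⟨p, -, hp⟩ := isCompact_univ.exists_isMaxOn Set.univ_nonempty
    hf.norm.continuousOn
  have hp' : ∀ x, ‖f x‖ ≤ ‖f p‖ := fun x => hp (Set.mem_univ x)
  have hΔp : 0 ≤ ΔRnormsq p := hmax p hp'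
  have hprod : 0 ≤ (1 - ‖f p‖ ^ 2 - ‖φ p‖ ^ 2) * ‖f p‖ ^ 2 := by
    have := key p
    nlinarith [hgrad_nonneg p]
  have hfp1 : ‖f p‖ ≤ 1 := by
    by_contra h
    push_neg at h
    have hpos : (0 : ℝ) < ‖f p‖ ^ 2 := by nlinarith
    have hc' : 0 ≤ 1 - ‖f p‖ ^ 2 - ‖φ p‖ ^ 2 :=
      (mul_nonneg_iff_of_pos_right hpos).mp hprod
    nlinarith [sq_nonneg ‖φ p‖]
  have hle1 : ∀ x, ‖f x‖ ≤ 1 := fun x => (hp' x).trans hfp1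
  -- Integrability
  have hcs : ∀ {g : M → ℝ}, Continuous g → Integrable g μ := by
    intro g hg
    exact hg.integrable_of_hasCompactSupport
      (IsCompact.of_isClosed_subset isCompact_univ (isClosed_tsupport g)
        (Set.subset_univ _))
  have hcf2 : Continuous (fun x => 1 - ‖f x‖ ^ 2) :=
    continuous_const.sub (hf.norm.pow 2)
  have hcφ2 : Continuous (fun x => ‖φ x‖ ^ 2) := hφ.norm.pow 2
  have hif : Integrable (fun x => 1 - ‖f x‖ ^ 2) μ := hcs hcf2
  have hiφ : Integrable (fun x => ‖φ x‖ ^ 2) μ := hcs hcφ2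
  -- Both integrals vanish
  have hnonneg_f : ∀ x, 0 ≤ 1 - ‖f x‖ ^ 2 := by
    intro x
    nlinarith [hle1 x, norm_nonneg (f x)]
  have hnonneg_φ : ∀ x, 0 ≤ ‖φ x‖ ^ 2 := fun x => sq_nonneg _
  have hIφ : 0 ≤ ∫ x, ‖φ x‖ ^ 2 ∂μ := integral_nonneg hnonneg_φ
  have hIf : 0 ≤ ∫ x, (1 - ‖f x‖ ^ 2) ∂μ := integral_nonneg hnonneg_f
  have hneg : ∫ x, (‖f x‖ ^ 2 - 1) ∂μ = - ∫ x, (1 - ‖f x‖ ^ 2) ∂μ := by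
    rw [← integral_neg]; congr 1; ext x; ring
  have hzero_f : ∫ x, (1 - ‖f x‖ ^ 2) ∂μ = 0 := by
    rw [hneg] at hint; linarith
  have hzero_φ : ∫ x, ‖φ x‖ ^ 2 ∂μ = 0 := by
    rw [hneg] at hint; linarith
  -- pointwise vanishing via continuity and open-positive measure
  have hae_f : (fun x => 1 - ‖f x‖ ^ 2) =ᵐ[μ] 0 :=
    (integral_eq_zero_iff_of_nonneg hnonneg_f hif).mp hzero_f
  have hae_φ : (fun x => ‖φ x‖ ^ 2) =ᵐ[μ] 0 :=
    (integral_eq_zero_iff_of_nonneg hnonneg_φ hiφ).mp hzero_φ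
  have heq_f : (fun x => 1 - ‖f x‖ ^ 2) = 0 :=
    ((Continuous.ae_eq_iff_eq μ hcf2 continuous_const).mp hae_f)
  have heq_φ : (fun x => ‖φ x‖ ^ 2) = 0 :=
    ((Continuous.ae_eq_iff_eq μ hcφ2 continuous_const).mp hae_φ)
  have hnorm1 : ∀ x, ‖f x‖ = 1 := by
    intro x
    have h1 : 1 - ‖f x‖ ^ 2 = 0 := congrFun heq_f x
    have h2 : (‖f x‖ - 1) * (‖f x‖ + 1) = 0 := by nlinarith
    rcases mul_eq_zero.mp h2 with h | h
    · linarith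
    · nlinarith [norm_nonneg (f x)]
  have hφ0 : ∀ x, φ x = 0 := by
    intro x
    have h1 : ‖φ x‖ ^ 2 = 0 := congrFun heq_φ x
    have : ‖φ x‖ = 0 := by nlinarith [norm_nonneg (φ x)]
    exact norm_eq_zero.mp this
  refine ⟨hnorm1, hφ0, fun x => ?_⟩
  have hΔ0 : ΔRnormsq x = 0 := hconst (fun a b => by rw [hnorm1 a, hnorm1 b]) x
  have := key x
  rw [hΔ0, hnorm1 x] at this
  have hφx : ‖φ x‖ = 0 := by rw [hφ0 x]; simp
  rw [hφx] at this
  nlinarith
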